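/- Let (A, m, Δ, η, ε) be a topologically free K[[ℏ]]-bialgebra such that A/ℏA is, for each a ∈ A/ℏA, conilpotent (i.e. (id − η∘ε)^{⊗n} ∘ Δ^{(n)}(a) = 0 for large n). Then for every a ∈ A, the ℏ-adic valuation of (id − η∘ε)^{⊗n} ∘ Δ^{(n)}(a) tends to infinity as n → ∞. -/

import Mathlib

open TensorProduct

noncomputable section

universe u

variable (K : Type u) [Field K] [CharZero K]
variable (A : Type u) [Ring A] [Bialgebra (PowerSeries K) A]

/-- The iterated tensor powers `A^{⊗n}` (with `A^{⊗0} = K[[ℏ]]`). -/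
def Tpow : ℕ → ModuleCat (PowerSeries K)
  | 0 => ModuleCat.of (PowerSeries K) (PowerSeries K)
  | n + 1 => ModuleCat.of (PowerSeries K) (A ⊗[PowerSeries K] (Tpow n))

/-- The iterated reduced coproduct `(id − η∘ε)^{⊗n} ∘ Δ^{(n)} : A → A^{⊗n}`. -/
def Ered : ∀ n : ℕ, A →ₗ[PowerSeries K] Tpow K A n
  | 0 => (Coalgebra.counit : A →ₗ[PowerSeries K] PowerSeries K)
  | n + 1 =>
      (TensorProduct.map
        (LinearMap.id - Algebra.linearMap (PowerSeries K) A ∘ₗ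
          (Coalgebra.counit : A →ₗ[PowerSeries K] PowerSeries K))
        (Ered n)) ∘ₗ (Coalgebra.comul : A →ₗ[PowerSeries K] A ⊗[PowerSeries K] A)

set_option linter.unusedSectionVars false
set_option linter.unusedVariables false

/-- projection `id - η∘ε`. -/
def piA : A →ₗ[PowerSeries K] A :=
  LinearMap.id - Algebra.linearMap (PowerSeries K) A ∘ₗ
    (Coalgebra.counit : A →ₗ[PowerSeries K] PowerSeries K)

lemma piA_one : piA K A 1 = 0 := by
  simp [piA]

lemma piA_apply (a : A) :
    piA K A a = a - algebraMap (PowerSeries K) A (Coalgebra.counit a) := rfl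

/-- `A^{⊗(n+1)}`. -/
def Ppow : ℕ → ModuleCat (PowerSeries K)
  | 0 => ModuleCat.of (PowerSeries K) A
  | n + 1 => ModuleCat.of (PowerSeries K) (A ⊗[PowerSeries K] (Ppow n))

/-- all-π iterated reduced coproduct. -/
def Pred : ∀ n : ℕ, A →ₗ[PowerSeries K] Ppow K A n
  | 0 => piA K A
  | n + 1 => (TensorProduct.map (piA K A) (Pred n)) ∘ₗ
      (Coalgebra.comul : A →ₗ[PowerSeries K] A ⊗[PowerSeries K] A)

def Lmap : ∀ n : ℕ, Ppow K A n →ₗ[PowerSeries K] Ppow K A (n + 1)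
  | 0 => (TensorProduct.map (piA K A) (piA K A)) ∘ₗ
      (Coalgebra.comul : A →ₗ[PowerSeries K] A ⊗[PowerSeries K] A)
  | n + 1 => LinearMap.lTensor A (Lmap n)

def Lit (n : ℕ) : ∀ p : ℕ, Ppow K A n →ₗ[PowerSeries K] Ppow K A (n + p)
  | 0 => LinearMap.id
  | p + 1 => Lmap K A (n + p) ∘ₗ Lit n p

def jmap : ∀ n : ℕ, Ppow K A n →ₗ[PowerSeries K] Tpow K A (n + 1)
  | 0 => (TensorProduct.mk (PowerSeries K) A (PowerSeries K)).flip 1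
  | n + 1 => LinearMap.lTensor A (jmap n)

def rmap : ∀ n : ℕ, Tpow K A (n + 1) →ₗ[PowerSeries K] Ppow K A n
  | 0 => (TensorProduct.rid (PowerSeries K) A).toLinearMap
  | n + 1 => LinearMap.lTensor A (rmap n)

lemma rj : ∀ n : ℕ, rmap K A n ∘ₗ jmap K A n = LinearMap.id
  | 0 => by
      ext a
      show (TensorProduct.rid (PowerSeries K) A) ((a : A) ⊗ₜ (1 : PowerSeries K)) = a
      exact (TensorProduct.rid_tmul (a : A) (1 : PowerSeries K)).trans (one_smul _ _)
  | n + 1 => by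
      show LinearMap.lTensor A (rmap K A n) ∘ₗ LinearMap.lTensor A (jmap K A n) = _
      rw [← LinearMap.lTensor_comp, rj n, LinearMap.lTensor_id]
      rfl

lemma Ej : ∀ n : ℕ, Ered K A (n + 1) = jmap K A n ∘ₗ Pred K A n
  | 0 => by
      show (TensorProduct.map (piA K A) Coalgebra.counit) ∘ₗ Coalgebra.comul = _
      rw [← LinearMap.rTensor_comp_lTensor, LinearMap.comp_assoc,
        Coalgebra.lTensor_counit_comp_comul]
      ext a
      show LinearMap.rTensor (PowerSeries K) (piA K A) (a ⊗ₜ 1) = (piA K A a) ⊗ₜ 1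
      simp
  | n + 1 => by
      show (TensorProduct.map (piA K A) (Ered K A (n + 1))) ∘ₗ Coalgebra.comul = _
      rw [Ej n]
      show _ = LinearMap.lTensor A (jmap K A n) ∘ₗ
        ((TensorProduct.map (piA K A) (Pred K A n)) ∘ₗ Coalgebra.comul)
      rw [← LinearMap.comp_assoc]
      congr 1
      have : TensorProduct.map (piA K A) (jmap K A n ∘ₗ Pred K A n) =
          TensorProduct.map (LinearMap.id ∘ₗ piA K A) (jmap K A n ∘ₗ Pred K A n) := by
        rw [LinearMap.id_comp]
      rw [this, TensorProduct.map_comp]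
      rfl

lemma mapPiPi_comul_piA (a : A) :
    TensorProduct.map (piA K A) (piA K A) (Coalgebra.comul (piA K A a)) =
      TensorProduct.map (piA K A) (piA K A) (Coalgebra.comul a) := by
  rw [piA_apply, map_sub, map_sub, Bialgebra.comul_algebraMap]
  have h1 : (algebraMap (PowerSeries K) (A ⊗[PowerSeries K] A)) (Coalgebra.counit a)
      = (Coalgebra.counit a : PowerSeries K) • ((1 : A) ⊗ₜ (1 : A)) := by
    rw [Algebra.algebraMap_eq_smul_one, Algebra.TensorProduct.one_def]
  rw [h1, map_smul, TensorProduct.map_tmul, piA_one, TensorProduct.zero_tmul,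
    smul_zero, sub_zero]

lemma PL : ∀ n : ℕ, Pred K A (n + 1) = Lmap K A n ∘ₗ Pred K A n
  | 0 => by
      ext a
      show TensorProduct.map (piA K A) (piA K A) (Coalgebra.comul a) =
        TensorProduct.map (piA K A) (piA K A) (Coalgebra.comul (piA K A a))
      rw [mapPiPi_comul_piA]
  | n + 1 => by
      show (TensorProduct.map (piA K A) (Pred K A (n + 1))) ∘ₗ Coalgebra.comul =
        LinearMap.lTensor A (Lmap K A n) ∘ₗ
          ((TensorProduct.map (piA K A) (Pred K A n)) ∘ₗ Coalgebra.comul)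
      conv_lhs => rw [PL n]
      rw [← LinearMap.comp_assoc]
      congr 1
      have : TensorProduct.map (piA K A) (Lmap K A n ∘ₗ Pred K A n) =
          TensorProduct.map (LinearMap.id ∘ₗ piA K A) (Lmap K A n ∘ₗ Pred K A n) := by
        rw [LinearMap.id_comp]
      rw [this, TensorProduct.map_comp]
      rfl

lemma PLit (n : ℕ) : ∀ p : ℕ, Pred K A (n + p) = Lit K A n p ∘ₗ Pred K A n
  | 0 => by rw [Lit]; rfl
  | p + 1 => by
      show Pred K A ((n + p) + 1) = (Lmap K A (n + p) ∘ₗ Lit K A n p) ∘ₗ Pred K A n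
      rw [PL, PLit n p, LinearMap.comp_assoc]

lemma Lit_one : ∀ p : ℕ, Lit K A 0 (p + 1) (1 : A) = 0
  | 0 => by
      show Lmap K A 0 (Lit K A 0 0 (1 : A)) = 0
      rw [Lit]
      show TensorProduct.map (piA K A) (piA K A) (Coalgebra.comul (1 : A)) = 0
      rw [Bialgebra.comul_one, Algebra.TensorProduct.one_def, TensorProduct.map_tmul,
        piA_one, TensorProduct.zero_tmul]
  | p + 1 => by
      show Lmap K A (0 + (p + 1)) (Lit K A 0 (p + 1) (1 : A)) = 0
      rw [Lit_one p, map_zero]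

def pcast {n m : ℕ} (h : n = m) : Ppow K A n →ₗ[PowerSeries K] Ppow K A m :=
  h ▸ LinearMap.id

lemma Lmap_pcast {n m : ℕ} (h : n = m) (x : Ppow K A n) :
    Lmap K A m (pcast K A h x) = pcast K A (by rw [h]) (Lmap K A n x) := by
  subst h; rfl

lemma pcast_smul {n m : ℕ} (h : n = m) (c : PowerSeries K) (x : Ppow K A n) :
    pcast K A h (c • x) = c • pcast K A h x := by subst h; rfl

lemma Lit_tmul (N : ℕ) (a : A) (u : Ppow K A N) : ∀ p : ℕ,
    Lit K A (N + 1) p (a ⊗ₜ[PowerSeries K] u) =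
      pcast K A (n := (N + p) + 1) (m := (N + 1) + p) (by omega)
        (a ⊗ₜ[PowerSeries K] (Lit K A N p u))
  | 0 => rfl
  | p + 1 => by
      show Lmap K A ((N + 1) + p) (Lit K A (N + 1) p (a ⊗ₜ[PowerSeries K] u)) = _
      erw [Lit_tmul N a u p, Lmap_pcast]
      show pcast K A (n := ((N + p) + 1) + 1) (m := ((N + 1) + p) + 1) (by omega)
        (LinearMap.lTensor A (Lmap K A (N + p))
          (a ⊗ₜ[PowerSeries K] (Lit K A N p u))) = _
      rw [LinearMap.lTensor_tmul]
      rfl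

lemma Pred_eq_rmap_Ered (n : ℕ) (a : A) :
    Pred K A n a = rmap K A n (Ered K A (n + 1) a) := by
  rw [Ej]
  show Pred K A n a = (rmap K A n ∘ₗ jmap K A n) (Pred K A n a)
  rw [rj]
  rfl

lemma main (hconil0 : ∀ a : A, ∃ N : ℕ, ∀ n ≥ N,
      ∃ z : Tpow K A n, Ered K A n a = (PowerSeries.X : PowerSeries K) • z) :
    ∀ (N : ℕ) (w : Ppow K A N), ∃ M : ℕ, ∀ p ≥ M,
      ∃ v : Ppow K A (N + p), Lit K A N p w = (PowerSeries.X : PowerSeries K) • v := by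
  intro N
  induction N with
  | zero =>
    intro w
    obtain ⟨Nw, hNw⟩ := hconil0 w
    refine ⟨Nw + 1, fun p hp => ?_⟩
    obtain ⟨q, rfl⟩ : ∃ q, p = q + 1 := ⟨p - 1, by omega⟩
    have h0 : Lit K A 0 (q + 1) (piA K A w) = Lit K A 0 (q + 1) w := by
      erw [piA_apply, map_sub, Algebra.algebraMap_eq_smul_one, map_smul, Lit_one,
        smul_zero, sub_zero]
    have h1 : Lit K A 0 (q + 1) w = Pred K A (0 + (q + 1)) w := by
      rw [PLit, ← h0]; rfl
    obtain ⟨z, hz⟩ := hNw ((0 + (q + 1)) + 1) (by omega)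
    refine ⟨rmap K A _ z, ?_⟩
    erw [h1, Pred_eq_rmap_Ered, hz, map_smul]
  | succ N ih =>
    intro w
    induction w using TensorProduct.induction_on with
    | zero => exact ⟨0, fun p _ => ⟨0, by erw [map_zero, smul_zero]⟩⟩
    | tmul a u =>
      obtain ⟨M, hM⟩ := ih u
      refine ⟨M, fun p hp => ?_⟩
      obtain ⟨v, hv⟩ := hM p hp
      refine ⟨pcast K A (n := (N + p) + 1) (m := (N + 1) + p) (by omega)
        (a ⊗ₜ[PowerSeries K] v), ?_⟩
      erw [Lit_tmul, hv, ← pcast_smul]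
      congr 1
      rw [tmul_smul]
      rfl
    | add x y hx hy =>
      obtain ⟨M1, h1⟩ := hx
      obtain ⟨M2, h2⟩ := hy
      refine ⟨max M1 M2, fun p hp => ?_⟩
      obtain ⟨v1, hv1⟩ := h1 p (le_trans (le_max_left _ _) hp)
      obtain ⟨v2, hv2⟩ := h2 p (le_trans (le_max_right _ _) hp)
      exact ⟨v1 + v2, by erw [map_add, hv1, hv2, smul_add]⟩

/- Let `A` be a topologically free `K[[ℏ]]`-bialgebra (complete, separated and ℏ-torsion-free)
such that `A/ℏA` is conilpotent: for each `a`, `(id − η∘ε)^{⊗n}∘Δ^{(n)}(a) ≡ 0 mod ℏ` for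
large `n`.  Then for every `a ∈ A` the ℏ-adic valuation of `(id − η∘ε)^{⊗n}∘Δ^{(n)}(a)`
tends to infinity as `n → ∞`. -/
theorem stmt6
    [IsAdicComplete (Ideal.span {(PowerSeries.X : PowerSeries K)}) A]
    (htf : ∀ a : A, (PowerSeries.X : PowerSeries K) • a = 0 → a = 0)
    (hconil0 : ∀ a : A, ∃ N : ℕ, ∀ n ≥ N,
      ∃ z : Tpow K A n, Ered K A n a = (PowerSeries.X : PowerSeries K) • z) :
    ∀ (a : A) (k : ℕ), ∃ N : ℕ, ∀ n ≥ N,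
      ∃ z : Tpow K A n, Ered K A n a = (PowerSeries.X : PowerSeries K) ^ k • z := by
  intro a k
  induction k with
  | zero => exact ⟨0, fun n _ => ⟨Ered K A n a, by rw [pow_zero, one_smul]⟩⟩
  | succ k ih =>
    obtain ⟨N, hN⟩ := ih
    obtain ⟨z, hz⟩ := hN (N + 1) (by omega)
    have hP : Pred K A N a = (PowerSeries.X : PowerSeries K) ^ k • rmap K A N z := by
      rw [Pred_eq_rmap_Ered, hz, map_smul]
    obtain ⟨M, hM⟩ := main K A hconil0 N (rmap K A N z)
    refine ⟨N + M + 1, fun n hn => ?_⟩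
    obtain ⟨p, hpM, rfl⟩ : ∃ p, M ≤ p ∧ n = (N + p) + 1 := ⟨n - N - 1, by omega, by omega⟩
    obtain ⟨v, hv⟩ := hM p hpM
    refine ⟨jmap K A (N + p) v, ?_⟩
    rw [Ej]
    show jmap K A (N + p) (Pred K A (N + p) a) = _
    have : Pred K A (N + p) a = Lit K A N p (Pred K A N a) := by rw [PLit]; rfl
    rw [this, hP, map_smul, hv, map_smul, map_smul, smul_smul, ← pow_succ]

end
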